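/- Let p be a prime, q a power of p, and 0 ≤ r ≤ p−1. Let V be the space of homogeneous polynomials of degree r in two variables X, Y over an algebraic closure 𝔽̄_p of 𝔽_p. Then the subspace of polynomials f ∈ V satisfying f(X, bX + Y) = f(X, Y) for all b ∈ 𝔽_q is exactly the line spanned by X^r. -/

import Mathlib

open MvPolynomial

lemma aux_eval_aeval {K : Type*} [CommSemiring K] (g : Fin 2 → Polynomial K)
    (φ : MvPolynomial (Fin 2) K) (x : K) :
    Polynomial.eval x (MvPolynomial.aeval g φ) =
      MvPolynomial.eval (fun i => (g i).eval x) φ := by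
  induction φ using MvPolynomial.induction_on with
  | C a => simp
  | add p q hp hq => simp [hp, hq]
  | mul_X p i hp => simp [hp]

lemma aux_eval_smul {K : Type*} [CommSemiring K] {φ : MvPolynomial (Fin 2) K} {n : ℕ}
    (hφ : φ.IsHomogeneous n) (c : K) (v : Fin 2 → K) :
    MvPolynomial.eval (c • v) φ = c ^ n * MvPolynomial.eval v φ := by
  rw [MvPolynomial.eval_eq, MvPolynomial.eval_eq, Finset.mul_sum]
  refine Finset.sum_congr rfl fun d hd => ?_
  have hw := hφ (MvPolynomial.mem_support_iff.mp hd)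
  have hsum : ∑ i ∈ d.support, d i = n := by
    rw [← hw]
    simp [Finsupp.weight_apply, Finsupp.sum, smul_eq_mul]
  simp only [Pi.smul_apply, smul_eq_mul, mul_pow, Finset.prod_mul_distrib,
    Finset.prod_pow_eq_pow_sum, hsum]
  ring

/-- For `0 ≤ r ≤ p - 1`, the homogeneous polynomials of degree `r` in `X, Y` over
`𝔽̄_p` invariant under all substitutions `Y ↦ bX + Y` with `b ∈ 𝔽_q` form exactly the
line spanned by `X^r`. -/
theorem stmt16 (p : ℕ) [Fact p.Prime] (f : ℕ) (hf : 0 < f) (q : ℕ) (hq : q = p ^ f)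
    (r : ℕ) (hr : r ≤ p - 1)
    (F : MvPolynomial (Fin 2) (AlgebraicClosure (ZMod p)))
    (hF : F.IsHomogeneous r) :
    (∀ b : AlgebraicClosure (ZMod p), b ^ q = b →
        MvPolynomial.bind₁
          (fun i : Fin 2 => if i = 0 then MvPolynomial.X 0
            else MvPolynomial.C b * MvPolynomial.X 0 + MvPolynomial.X 1) F = F) ↔
      ∃ c : AlgebraicClosure (ZMod p),
        F = MvPolynomial.C c * MvPolynomial.X 0 ^ r := by
  set K := AlgebraicClosure (ZMod p)
  have hp : p.Prime := Fact.out
  constructor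
  · intro h
    have hrp : r < p := lt_of_le_of_lt hr (Nat.sub_lt hp.pos one_pos)
    -- elements of the prime field satisfy b ^ q = b
    have hfrob : ∀ a : ZMod p, (algebraMap (ZMod p) K a) ^ q = algebraMap (ZMod p) K a := by
      intro a
      have hx : (algebraMap (ZMod p) K a) ^ p = algebraMap (ZMod p) K a := by
        rw [← map_pow, ZMod.pow_card]
      have key : ∀ n : ℕ, (algebraMap (ZMod p) K a) ^ p ^ n = algebraMap (ZMod p) K a := by
        intro n
        induction n with
        | zero => simp
        | succ m ih => rw [pow_succ, pow_mul, ih, hx]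
      rw [hq, key]
    -- evaluated form of the invariance
    have heval : ∀ b : K, b ^ q = b → ∀ v : Fin 2 → K,
        MvPolynomial.eval ![v 0, b * v 0 + v 1] F = MvPolynomial.eval v F := by
      intro b hb v
      have h2 := congrArg (MvPolynomial.eval v) (h b hb)
      have h3 : MvPolynomial.eval v (MvPolynomial.bind₁
          (fun i : Fin 2 => if i = 0 then MvPolynomial.X 0
            else MvPolynomial.C b * MvPolynomial.X 0 + MvPolynomial.X 1) F) =
          MvPolynomial.eval (fun i : Fin 2 => MvPolynomial.eval v
            (if i = 0 then MvPolynomial.X 0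
              else MvPolynomial.C b * MvPolynomial.X 0 + MvPolynomial.X 1)) F :=
        MvPolynomial.eval₂Hom_bind₁ (RingHom.id K) v _ F
      rw [h3] at h2
      rw [← h2]
      have hfun : (fun i : Fin 2 => MvPolynomial.eval v
            (if i = 0 then MvPolynomial.X 0
              else MvPolynomial.C b * MvPolynomial.X 0 + MvPolynomial.X 1)) =
          ![v 0, b * v 0 + v 1] := by
        funext i
        fin_cases i <;> simp
      rw [hfun]
    -- the dehomogenization P(t) = F(1,t)
    set P : Polynomial K := MvPolynomial.aeval ![(1 : Polynomial K), Polynomial.X] F with hP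
    have hPeval : ∀ t : K, P.eval t = MvPolynomial.eval ![1, t] F := by
      intro t
      rw [hP, aux_eval_aeval]
      have hfun : (fun i : Fin 2 => Polynomial.eval t (![(1 : Polynomial K), Polynomial.X] i)) =
          ![1, t] := by
        funext i
        fin_cases i <;> simp
      rw [hfun]
    have hPdeg : P.natDegree ≤ r := by
      have := MvPolynomial.aeval_natDegree_le F hF.totalDegree_le
        ![(1 : Polynomial K), Polynomial.X] (n := 1) (fun i => by
          fin_cases i <;> simp [Polynomial.natDegree_one])
      simpa using this
    have hPb : ∀ a : ZMod p, P.eval (algebraMap (ZMod p) K a) = P.eval 0 := by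
      intro a
      rw [hPeval, hPeval]
      have := heval (algebraMap (ZMod p) K a) (hfrob a) ![1, 0]
      simpa using this
    set c : K := P.eval 0 with hc
    have hPconst : P = Polynomial.C c := by
      have h0 : P - Polynomial.C c = 0 := by
        refine Polynomial.eq_zero_of_natDegree_lt_card_of_eval_eq_zero
          (P - Polynomial.C c)
          (f := fun a : ZMod p => algebraMap (ZMod p) K a)
          ((algebraMap (ZMod p) K).injective) (fun a => ?_) ?_
        · simp [hPb a]
        · calc (P - Polynomial.C c).natDegree
              ≤ max P.natDegree (Polynomial.C c).natDegree := Polynomial.natDegree_sub_le _ _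
            _ ≤ r := by simp [hPdeg]
            _ < p := hrp
            _ = Fintype.card (ZMod p) := (ZMod.card p).symm
      exact sub_eq_zero.mp h0
    -- F(1, t) = c for all t
    have hconst : ∀ t : K, MvPolynomial.eval ![1, t] F = c := by
      intro t
      rw [← hPeval, hPconst, Polynomial.eval_C]
    -- by homogeneity, F(x, y) = c * x ^ r for x ≠ 0
    have hscale : ∀ x y : K, x ≠ 0 → MvPolynomial.eval ![x, y] F = c * x ^ r := by
      intro x y hx
      have hs := aux_eval_smul hF x ![1, y / x]
      have hv : x • ![(1 : K), y / x] = ![x, y] := by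
        funext i
        fin_cases i <;> simp [mul_div_cancel₀, hx]
      rw [hv, hconst] at hs
      rw [hs]
      ring
    -- hence F(x, y) = c * x ^ r for all x, y
    have hall : ∀ x y : K, MvPolynomial.eval ![x, y] F = c * x ^ r := by
      intro x y
      set H : Polynomial K := MvPolynomial.aeval ![Polynomial.X, Polynomial.C y] F -
        Polynomial.C c * Polynomial.X ^ r with hH
      have hHeval : ∀ x' : K, H.eval x' = MvPolynomial.eval ![x', y] F - c * x' ^ r := by
        intro x'
        rw [hH]
        simp only [Polynomial.eval_sub, Polynomial.eval_mul, Polynomial.eval_pow,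
          Polynomial.eval_C, Polynomial.eval_X, aux_eval_aeval]
        have hfun : (fun i : Fin 2 => Polynomial.eval x'
            (![Polynomial.X, Polynomial.C y] i)) = ![x', y] := by
          funext i
          fin_cases i <;> simp
        rw [hfun]
      have hzero : H = 0 := by
        apply Polynomial.eq_zero_of_infinite_isRoot
        apply Set.Infinite.mono (s := {x' : K | x' ≠ 0})
        · intro x' hx'
          simp only [Set.mem_setOf_eq, Polynomial.IsRoot.def, hHeval, hscale x' y hx', sub_self]
        · exact (Set.finite_singleton (0 : K)).infinite_compl
      have := hHeval x
      rw [hzero, Polynomial.eval_zero] at this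
      exact sub_eq_zero.mp this.symm
    refine ⟨c, MvPolynomial.funext fun v => ?_⟩
    have hv : ![v 0, v 1] = v := by
      funext i
      fin_cases i <;> rfl
    rw [← hv, hall]
    simp
  · rintro ⟨c, rfl⟩ b hb
    rw [map_mul, map_pow, MvPolynomial.algHom_C, MvPolynomial.bind₁_X_right]
    simp
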